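/- arXiv:2508.19218 — 2 statements merged into one kernel-verified Lean document; each statement's English description precedes it below -/
import Mathlib

section
/- Let M, N be positive integers, let a : Fin M → ℝ and b : Fin N → ℝ, let ε ≥ 0 and ρ > 0 be real numbers, and let S ⊆ Fin M and T ⊆ Fin N be subsets such that |∑_{i∈S} a i − ∑_{j∈T} b j| ≤ ε. Define the discretised vectors ā i = round(ρ · a i) and b̄ j = round(ρ · b j) (round to nearest integer). Then |∑_{i∈S} ā i − ∑_{j∈T} b̄ j| ≤ ρ·ε + (M+N)/2, and in particular this quantity is at most ⌈ρ·ε + (M+N)/2⌉. -/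
/-- Proposition 1 (core inequality): discretising a valid match enlarges the
tolerance to at most `ρ*ε + (M+N)/2 ≤ ⌈ρ*ε + (M+N)/2⌉`. -/
theorem ssmp_discretisation
    (M N : ℕ) (hM : 0 < M) (hN : 0 < N)
    (a : Fin M → ℝ) (b : Fin N → ℝ)
    (ε ρ : ℝ) (hε : 0 ≤ ε) (hρ : 0 < ρ)
    (S : Finset (Fin M)) (T : Finset (Fin N))
    (hmatch : |∑ i ∈ S, a i - ∑ j ∈ T, b j| ≤ ε) :
    |(∑ i ∈ S, (round (ρ * a i) : ℝ)) - ∑ j ∈ T, (round (ρ * b j) : ℝ)|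
      ≤ ρ * ε + (M + N) / 2 ∧
    ρ * ε + (M + N) / 2 ≤ (⌈ρ * ε + (M + N) / 2⌉ : ℝ) := by
  refine ⟨?_, Int.le_ceil _⟩
  have hA : |(∑ i ∈ S, (round (ρ * a i) : ℝ)) - ρ * ∑ i ∈ S, a i| ≤ (M : ℝ) / 2 := by
    rw [Finset.mul_sum, ← Finset.sum_sub_distrib]
    calc |∑ i ∈ S, ((round (ρ * a i) : ℝ) - ρ * a i)|
        ≤ ∑ i ∈ S, |(round (ρ * a i) : ℝ) - ρ * a i| := Finset.abs_sum_le_sum_abs _ _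
      _ ≤ ∑ _i ∈ S, (1/2 : ℝ) := Finset.sum_le_sum fun i _ => by
          simpa [abs_sub_comm] using abs_sub_round (ρ * a i)
      _ = (S.card : ℝ) / 2 := by rw [Finset.sum_const, nsmul_eq_mul]; ring
      _ ≤ (M : ℝ) / 2 := by
          have h : (S.card : ℝ) ≤ M := by
            exact_mod_cast (S.card_le_univ.trans_eq (by simp))
          linarith
  have hB : |(∑ j ∈ T, (round (ρ * b j) : ℝ)) - ρ * ∑ j ∈ T, b j| ≤ (N : ℝ) / 2 := by
    rw [Finset.mul_sum, ← Finset.sum_sub_distrib]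
    calc |∑ j ∈ T, ((round (ρ * b j) : ℝ) - ρ * b j)|
        ≤ ∑ j ∈ T, |(round (ρ * b j) : ℝ) - ρ * b j| := Finset.abs_sum_le_sum_abs _ _
      _ ≤ ∑ _j ∈ T, (1/2 : ℝ) := Finset.sum_le_sum fun j _ => by
          simpa [abs_sub_comm] using abs_sub_round (ρ * b j)
      _ = (T.card : ℝ) / 2 := by rw [Finset.sum_const, nsmul_eq_mul]; ring
      _ ≤ (N : ℝ) / 2 := by
          have h : (T.card : ℝ) ≤ N := by
            exact_mod_cast (T.card_le_univ.trans_eq (by simp))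
          linarith
  have hmid : |ρ * ∑ i ∈ S, a i - ρ * ∑ j ∈ T, b j| ≤ ρ * ε := by
    rw [← mul_sub, abs_mul, abs_of_pos hρ]
    exact mul_le_mul_of_nonneg_left hmatch hρ.le
  calc |(∑ i ∈ S, (round (ρ * a i) : ℝ)) - ∑ j ∈ T, (round (ρ * b j) : ℝ)|
      = |((∑ i ∈ S, (round (ρ * a i) : ℝ)) - ρ * ∑ i ∈ S, a i)
          + (ρ * ∑ i ∈ S, a i - ρ * ∑ j ∈ T, b j)
          + (ρ * ∑ j ∈ T, b j - ∑ j ∈ T, (round (ρ * b j) : ℝ))| := by ring_nf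
    _ ≤ |((∑ i ∈ S, (round (ρ * a i) : ℝ)) - ρ * ∑ i ∈ S, a i)|
          + |(ρ * ∑ i ∈ S, a i - ρ * ∑ j ∈ T, b j)|
          + |(ρ * ∑ j ∈ T, b j - ∑ j ∈ T, (round (ρ * b j) : ℝ))| := abs_add_three _ _ _
    _ ≤ (M : ℝ) / 2 + ρ * ε + (N : ℝ) / 2 := by
        refine add_le_add (add_le_add hA hmid) ?_
        rw [abs_sub_comm]; exact hB
    _ = ρ * ε + (M + N) / 2 := by ring
end

section
/- Let M, N be positive integers, a : Fin M → ℝ, b : Fin N → ℝ, ε > 0 a real number, and 0 ≤ r ≤ N an integer splitting the index set of b into B' = {j : j < r} and B'' = {j : j ≥ r}. Then the following are equivalent: (1) there exist nonempty subsets S ⊆ Fin M and T ⊆ Fin N with |∑_{i∈S} a i − ∑_{j∈T} b j| ≤ ε; (2) there exist a nonempty subset S ⊆ Fin M and subsets T' ⊆ B', T'' ⊆ B'' with T' ∪ T'' nonempty such that, setting c = ∑_{j∈T'} b j and d = ∑_{j∈T''} b j, one has |∑_{i∈S} a i − c − d| ≤ ε and |round(d/ε) − round((∑_{i∈S} a i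 − c)/ε)| ≤ 1. -/
lemma round_close {u v : ℝ} (h : |u - v| ≤ 1) : |round u - round v| ≤ 1 := by
  have hu1 : (round u : ℝ) - u ≤ 1/2 := by
    have := abs_sub_round u
    rw [abs_sub_comm] at this
    linarith [abs_le.mp this]
  have hu2 : u - round u < 1/2 := by
    rw [round_eq]
    have := Int.sub_one_lt_floor (u + 1/2)
    push_cast
    linarith
  have hv1 : (round v : ℝ) - v ≤ 1/2 := by
    have := abs_sub_round v
    rw [abs_sub_comm] at this
    linarith [abs_le.mp this]
  have hv2 : v - round v < 1/2 := by
    rw [round_eq]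
    have := Int.sub_one_lt_floor (v + 1/2)
    push_cast
    linarith
  have h' := abs_le.mp h
  have : |((round u - round v : ℤ) : ℝ)| < 2 := by
    rw [abs_lt]
    push_cast
    constructor <;> linarith
  have : |round u - round v| < 2 := by exact_mod_cast this
  omega

/-- Correctness of the restricted search in the search solver (Theorem 1):
the restricted search over cached buckets finds a match iff one exists. -/
theorem search_solver_correct
    (M N : ℕ) (hM : 0 < M) (hN : 0 < N)
    (a : Fin M → ℝ) (b : Fin N → ℝ)
    (ε : ℝ) (hε : 0 < ε)
    (r : ℕ) (hr : r ≤ N) :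
    (∃ (S : Finset (Fin M)) (T : Finset (Fin N)),
        S.Nonempty ∧ T.Nonempty ∧
        |(∑ i ∈ S, a i) - ∑ j ∈ T, b j| ≤ ε)
    ↔
    (∃ (S : Finset (Fin M)) (T' T'' : Finset (Fin N)),
        S.Nonempty ∧
        (∀ j ∈ T', (j : ℕ) < r) ∧
        (∀ j ∈ T'', r ≤ (j : ℕ)) ∧
        (T' ∪ T'').Nonempty ∧
        |(∑ i ∈ S, a i) - (∑ j ∈ T', b j) - (∑ j ∈ T'', b j)| ≤ ε ∧
        |round ((∑ j ∈ T'', b j) / ε)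
          - round (((∑ i ∈ S, a i) - ∑ j ∈ T', b j) / ε)| ≤ 1) := by
  constructor
  · rintro ⟨S, T, hS, hT, habs⟩
    refine ⟨S, T.filter (fun j : Fin N => (j : ℕ) < r), T.filter (fun j : Fin N => ¬ (j : ℕ) < r),
      hS, ?_, ?_, ?_, ?_, ?_⟩
    · intro j hj; exact (Finset.mem_filter.mp hj).2
    · intro j hj; exact Nat.le_of_not_lt (Finset.mem_filter.mp hj).2
    · rwa [Finset.filter_union_filter_not_eq]
    · rw [sub_sub, Finset.sum_filter_add_sum_filter_not]
      exact habs
    · have hsum : ∑ j ∈ T, b j = (∑ j ∈ T.filter (fun j : Fin N => (j : ℕ) < r), b j)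
          + ∑ j ∈ T.filter (fun j : Fin N => ¬ (j : ℕ) < r), b j :=
        (Finset.sum_filter_add_sum_filter_not T (fun j => (j : ℕ) < r) b).symm
      rw [hsum] at habs
      apply round_close
      rw [div_sub_div_same, abs_div, abs_of_pos hε, div_le_one hε, abs_sub_comm]
      rw [sub_sub]
      exact habs
  · rintro ⟨S, T', T'', hS, hT', hT'', hne, habs, -⟩
    refine ⟨S, T' ∪ T'', hS, hne, ?_⟩
    have hdisj : Disjoint T' T'' := by
      rw [Finset.disjoint_left]
      intro j h1 h2
      exact absurd (hT'' j h2) (Nat.not_le.mpr (hT' j h1))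
    rw [Finset.sum_union hdisj, ← sub_sub]
    exact habs
end
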